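/- Let u : L² → S³ ⊂ ℝ⁴ be an immersed surface and f(p, t, y) = (t·u(p), y) : L² × ℝ⁺ × ℝ^{n−3} → ℝ^{n+1} the cone over u (n ≥ 4). Then the principal curvatures of f are k₁/t, k₂/t, 0, …, 0, and the Möbius metric of f equals g = [4H_u² − (2n/(n−1))(K_u − 1)]·(I_u + I_{H^{n−2}}), where I_{H^{n−2}} is the hyperbolic metric (dt² + Σ dy_i²)/t² on ℝ⁺ × ℝ^{n−3}. -/

import Mathlib

open Matrix Polynomial BigOperators

theorem cp2aux (A : Matrix (Fin 2) (Fin 2) ℝ) (a b : ℝ) (h1 : A.trace = a + b) (h2 : A.det = a * b) :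
    A.charpoly = (X - C a) * (X - C b) := by
  rw [Matrix.charpoly, Matrix.det_fin_two, charmatrix_apply_eq, charmatrix_apply_eq,
    charmatrix_apply_ne _ _ _ (by decide), charmatrix_apply_ne _ _ _ (by decide)]
  rw [Matrix.trace_fin_two] at h1
  rw [Matrix.det_fin_two] at h2
  have hc1 : C (A 0 0) + C (A 1 1) = C a + C b := by rw [← C_add, ← C_add, h1]
  have hc2 : C (A 0 0) * C (A 1 1) - C (A 0 1) * C (A 1 0) = C a * C b := by
    rw [← C_mul, ← C_mul, ← C_sub, ← C_mul, h2]
  linear_combination (-(X : ℝ[X])) * hc1 + hc2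

theorem traceFBaux {m k : ℕ} (A : Matrix (Fin m) (Fin m) ℝ) (D : Matrix (Fin k) (Fin k) ℝ) :
    (Matrix.fromBlocks A (0 : Matrix (Fin m) (Fin k) ℝ) (0 : Matrix (Fin k) (Fin m) ℝ) D).trace
      = A.trace + D.trace := by
  simp [Matrix.trace, Matrix.diag, Fintype.sum_sum_type]

/-- Proposition (cones, Example 3.2): let `u : L² → S³ ⊂ ℝ⁴` be an immersed
surface with principal curvatures `k₁, k₂`, mean curvature `H_u`, Gauss
curvature `K_u = 1 + k₁k₂` (Gauss equation in `S³`) and first fundamental form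
`I_u`, recorded by its symmetric shape operator `Su`.  The cone
`f(p,t,y) = (t·u(p), y) : L² × ℝ⁺ × ℝ^{n−3} → ℝ^{n+1}` has first fundamental
form `t²I_u + I_{ℝ^{n−2}}` and shape operator `(1/t)Su ⊕ 0` in an adapted
orthonormal frame.  Then for `t > 0` the principal curvatures of `f` are
`k₁/t, k₂/t, 0, …, 0`, and its Möbius metric `g = ρ² I_f` equals
`[4H_u² − (2n/(n−1))(K_u − 1)]·(I_u + I_{H^{n−2}})`, where `I_{H^{n−2}}` is the
hyperbolic metric `(1/t²)·Id` on `ℝ⁺ × ℝ^{n−3}` in the flat coordinates. -/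
theorem stmt12 (n : ℕ) (hn : 4 ≤ n) (L : Type*)
    (k₁ k₂ Hu Ku : L → ℝ)
    (Iu Su : L → Matrix (Fin 2) (Fin 2) ℝ)
    (hSsym : ∀ p, (Su p).IsSymm)
    (htr : ∀ p, (Su p).trace = k₁ p + k₂ p)
    (hdet : ∀ p, (Su p).det = k₁ p * k₂ p)
    (hH : ∀ p, Hu p = (k₁ p + k₂ p) / 2)
    (hK : ∀ p, Ku p = 1 + k₁ p * k₂ p)
    (If Sf : L → ℝ → Matrix (Fin 2 ⊕ Fin (n - 2)) (Fin 2 ⊕ Fin (n - 2)) ℝ)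
    (hIf : ∀ p t, If p t = Matrix.fromBlocks (t ^ 2 • Iu p) 0 0 1)
    (hSf : ∀ p t, Sf p t = Matrix.fromBlocks (t⁻¹ • Su p) 0 0 0)
    (ρsq : L → ℝ → ℝ)
    (hρsq : ∀ p t, ρsq p t = ((n : ℝ) / ((n : ℝ) - 1)) *
      ((Sf p t * (Sf p t)ᵀ).trace - n * ((Sf p t).trace / n) ^ 2))
    (g : L → ℝ → Matrix (Fin 2 ⊕ Fin (n - 2)) (Fin 2 ⊕ Fin (n - 2)) ℝ)
    (hg : ∀ p t, g p t = ρsq p t • If p t) :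
    (∀ p, ∀ t : ℝ, 0 < t → (Sf p t).charpoly =
      (X - C (k₁ p / t)) * (X - C (k₂ p / t)) * X ^ (n - 2)) ∧
    (∀ p, ∀ t : ℝ, 0 < t → g p t =
      (4 * (Hu p) ^ 2 - (2 * (n : ℝ) / ((n : ℝ) - 1)) * (Ku p - 1)) •
        Matrix.fromBlocks (Iu p) 0 0 ((t ^ 2)⁻¹ • 1)) := by
  constructor
  · intro p t ht
    rw [hSf, Matrix.charpoly_fromBlocks_zero₂₁]
    have h0 : (0 : Matrix (Fin (n - 2)) (Fin (n - 2)) ℝ).charpoly = X ^ (n - 2) := by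
      rw [Matrix.charpoly, charmatrix]
      simp [Matrix.det_smul]
    rw [h0]
    congr 1
    apply cp2aux
    · rw [Matrix.trace_smul, htr, smul_eq_mul]; ring
    · rw [Matrix.det_smul, hdet]
      simp only [smul_eq_mul, Fintype.card_fin]
      rw [div_mul_div_comm, ← sq t, inv_pow]
      exact inv_mul_eq_div _ _
  · intro p t ht
    have ht' : (t : ℝ) ≠ 0 := ne_of_gt ht
    have hn1 : ((n : ℝ) - 1) ≠ 0 := by
      have : (4 : ℝ) ≤ (n : ℝ) := by exact_mod_cast hn
      linarith
    have hnz : (n : ℝ) ≠ 0 := by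
      have : (4 : ℝ) ≤ (n : ℝ) := by exact_mod_cast hn
      linarith
    have hb : Su p 1 0 = Su p 0 1 := by
      have := congrFun (congrFun (hSsym p).eq 0) 1
      simpa [Matrix.transpose_apply] using this
    have htrS : Su p 0 0 + Su p 1 1 = k₁ p + k₂ p := by
      have := htr p; rwa [Matrix.trace_fin_two] at this
    have hdetS : Su p 0 0 * Su p 1 1 - Su p 0 1 * Su p 1 0 = k₁ p * k₂ p := by
      have := hdet p; rwa [Matrix.det_fin_two] at this
    have hSS : ((Su p) * (Su p)ᵀ).trace = (k₁ p + k₂ p) ^ 2 - 2 * (k₁ p * k₂ p) := by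
      rw [Matrix.trace_fin_two]
      simp only [Matrix.mul_apply, Fin.sum_univ_two, Matrix.transpose_apply]
      rw [hb] at hdetS ⊢
      linear_combination (Su p 0 0 + Su p 1 1 + k₁ p + k₂ p) * htrS - 2 * hdetS
    have htr1 : (Sf p t * (Sf p t)ᵀ).trace =
        t⁻¹ ^ 2 * ((k₁ p + k₂ p) ^ 2 - 2 * (k₁ p * k₂ p)) := by
      rw [hSf, Matrix.fromBlocks_transpose, Matrix.transpose_smul, Matrix.fromBlocks_multiply]
      simp only [Matrix.mul_zero, Matrix.zero_mul, add_zero, zero_add, Matrix.transpose_zero]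
      rw [Matrix.smul_mul, Matrix.mul_smul, traceFBaux]
      rw [Matrix.trace_zero, Matrix.trace_smul, Matrix.trace_smul, hSS]
      simp only [smul_eq_mul, add_zero]
      ring
    have htr2 : (Sf p t).trace = t⁻¹ * (k₁ p + k₂ p) := by
      rw [hSf, traceFBaux, Matrix.trace_zero, Matrix.trace_smul, htr, smul_eq_mul, add_zero]
    have hρ : ρsq p t =
        (4 * (Hu p) ^ 2 - (2 * (n : ℝ) / ((n : ℝ) - 1)) * (Ku p - 1)) / t ^ 2 := by
      rw [hρsq, htr1, htr2, hH, hK]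
      field_simp
      ring
    rw [hg, hIf, hρ]
    ext i j
    rcases i with i | i <;> rcases j with j | j <;>
        simp only [Matrix.smul_apply, Matrix.fromBlocks_apply₁₁, Matrix.fromBlocks_apply₁₂,
          Matrix.fromBlocks_apply₂₁, Matrix.fromBlocks_apply₂₂, Matrix.zero_apply,
          smul_eq_mul, mul_zero, smul_zero] <;>
      first
        | rfl
        | (field_simp; ring)
        | field_simp
        | (by_cases hij : i = j <;> simp [hij, Matrix.one_apply] <;> field_simp)
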